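/- Let B be a bicategory, A a separable Frobenius algebra on an object a, B a separable Frobenius algebra on an object b, and let X, Y : a → b be B-A-bimodules with left B-actions ρ^l_X, ρ^l_Y and right A-actions ρ^r_X, ρ^r_Y. For φ : X → Y define P_B(φ) := ρ^l_Y ∘ (1_B ⊗ φ) ∘ (1_B ⊗ ρ^l_X) ∘ ((Δ_B ∘ η_B) ⊗ 1_X) and P_A(φ) := ρ^r_Y ∘ (φ ⊗ 1_A) ∘ (ρ^r_X ⊗ 1_A) ∘ (1_X ⊗ (Δ_A ∘ η_A)). Then P_B ∘ P_A = P_A ∘ P_B; the composite π_{BA} := P_B ∘ P_A is idempotent; π_{BA}(φ) is a bimodule map for every φ : X → Y; and π_{BA}(φ) = φ whenever φ is a bimodule map. Hence π_{BA} is a projection of Hom(X,Y) onto the set Hom_{BA}(X,Y) of bimodule maps. -/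

import Mathlib

/-!
The averaging maps P_B and P_A commute and their composite projects onto
bimodule maps.

Conventions: the paper's horizontal composite `F ⊗ G` (first `G`, then `F`) is
Mathlib's `G ≫ F`.  A `B`-`A`-bimodule `X : a → b` has its left `B`-action
`B ⊗ X → X` given by `ρˡ : X ≫ B ⟶ X` and its right `A`-action `X ⊗ A → X`
given by `ρʳ : A ≫ X ⟶ X`.  All coherence isomorphisms suppressed in the paper
are inserted explicitly.
-/

open CategoryTheory Bicategory

universe w v u

/-- A Frobenius algebra on an object `a` of a bicategory. -/
structure Frob {C : Type u} [Bicategory.{w, v} C] (a : C) where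
  A : a ⟶ a
  mul : A ≫ A ⟶ A
  one : 𝟙 a ⟶ A
  comul : A ⟶ A ≫ A
  counit : A ⟶ 𝟙 a
  mul_assoc : (α_ A A A).hom ≫ A ◁ mul ≫ mul = mul ▷ A ≫ mul
  mul_one : (ρ_ A).inv ≫ A ◁ one ≫ mul = 𝟙 A
  one_mul : (λ_ A).inv ≫ one ▷ A ≫ mul = 𝟙 A
  comul_coassoc : comul ≫ A ◁ comul = comul ≫ comul ▷ A ≫ (α_ A A A).hom
  comul_counit : comul ≫ A ◁ counit ≫ (ρ_ A).hom = 𝟙 A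
  counit_comul : comul ≫ counit ▷ A ≫ (λ_ A).hom = 𝟙 A
  frob_left : A ◁ comul ≫ (α_ A A A).inv ≫ mul ▷ A = mul ≫ comul
  frob_right : comul ▷ A ≫ (α_ A A A).hom ≫ A ◁ mul = mul ≫ comul

variable {C : Type u} [Bicategory.{w, v} C]

/-- A `B`-`A`-bimodule structure on `X : a ⟶ b`: a left `B`-action `ρˡ`, a right
`A`-action `ρʳ`, each satisfying the module axioms, and the two actions
commute. -/
def IsBimodule {a b : C} (FA : Frob a) (FB : Frob b) (X : a ⟶ b)
    (ρl : X ≫ FB.A ⟶ X) (ρr : FA.A ≫ X ⟶ X) : Prop :=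
  ((α_ X FB.A FB.A).hom ≫ X ◁ FB.mul ≫ ρl = ρl ▷ FB.A ≫ ρl) ∧
  ((ρ_ X).inv ≫ X ◁ FB.one ≫ ρl = 𝟙 X) ∧
  ((α_ FA.A FA.A X).hom ≫ FA.A ◁ ρr ≫ ρr = FA.mul ▷ X ≫ ρr) ∧
  ((λ_ X).inv ≫ FA.one ▷ X ≫ ρr = 𝟙 X) ∧
  (ρr ▷ FB.A ≫ ρl = (α_ FA.A X FB.A).hom ≫ FA.A ◁ ρl ≫ ρr)

/-- A 2-morphism of bimodules is a bimodule map if it is both a left and a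
right module map. -/
def IsBimoduleMap {a b : C} (FA : Frob a) (FB : Frob b) {X Y : a ⟶ b}
    (ρlX : X ≫ FB.A ⟶ X) (ρrX : FA.A ≫ X ⟶ X)
    (ρlY : Y ≫ FB.A ⟶ Y) (ρrY : FA.A ≫ Y ⟶ Y) (φ : X ⟶ Y) : Prop :=
  (φ ▷ FB.A ≫ ρlY = ρlX ≫ φ) ∧ (FA.A ◁ φ ≫ ρrY = ρrX ≫ φ)

/-- `P_B(φ) := ρˡ_Y ∘ (1_B ⊗ φ) ∘ (1_B ⊗ ρˡ_X) ∘ ((Δ_B ∘ η_B) ⊗ 1_X)`. -/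
def PB {a b : C} (FA : Frob a) (FB : Frob b) {X Y : a ⟶ b}
    (ρlX : X ≫ FB.A ⟶ X) (ρlY : Y ≫ FB.A ⟶ Y) (φ : X ⟶ Y) : X ⟶ Y :=
  (ρ_ X).inv ≫ X ◁ (FB.one ≫ FB.comul) ≫ (α_ X FB.A FB.A).inv ≫
    ρlX ▷ FB.A ≫ φ ▷ FB.A ≫ ρlY

/-- `P_A(φ) := ρʳ_Y ∘ (φ ⊗ 1_A) ∘ (ρʳ_X ⊗ 1_A) ∘ (1_X ⊗ (Δ_A ∘ η_A))`. -/
def PA {a b : C} (FA : Frob a) (FB : Frob b) {X Y : a ⟶ b}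
    (ρrX : FA.A ≫ X ⟶ X) (ρrY : FA.A ≫ Y ⟶ Y) (φ : X ⟶ Y) : X ⟶ Y :=
  (λ_ X).inv ≫ (FA.one ≫ FA.comul) ▷ X ≫ (α_ FA.A FA.A X).hom ≫
    FA.A ◁ ρrX ≫ FA.A ◁ φ ≫ ρrY

section Helpers
variable {C : Type u} [Bicategory.{w, v} C]

section BSide
variable {a b : C} {B : b ⟶ b} {X Y : a ⟶ b}

lemma lAvg_fix (η : 𝟙 b ⟶ B) (Dc : B ⟶ B ≫ B) (μ : B ≫ B ⟶ B)
    (hsep : Dc ≫ μ = 𝟙 B)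
    (ρlX : X ≫ B ⟶ X) (ρlY : Y ≫ B ⟶ Y)
    (hXa : (α_ X B B).hom ≫ X ◁ μ ≫ ρlX = ρlX ▷ B ≫ ρlX)
    (hXu : (ρ_ X).inv ≫ X ◁ η ≫ ρlX = 𝟙 X)
    (φ : X ⟶ Y) (hφ : φ ▷ B ≫ ρlY = ρlX ≫ φ) :
    (ρ_ X).inv ≫ X ◁ (η ≫ Dc) ≫ (α_ X B B).inv ≫ ρlX ▷ B ≫ φ ▷ B ≫ ρlY = φ := by
  rw [hφ, ← reassoc_of% hXa]
  calc (ρ_ X).inv ≫ X ◁ (η ≫ Dc) ≫ (α_ X B B).inv ≫ (α_ X B B).hom ≫ X ◁ μ ≫ ρlX ≫ φ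
      = (ρ_ X).inv ≫ X ◁ (η ≫ Dc ≫ μ) ≫ ρlX ≫ φ := by bicategory
    _ = φ := by rw [hsep, Category.comp_id, reassoc_of% hXu]

lemma lAvg_leftmod (η : 𝟙 b ⟶ B) (Dc : B ⟶ B ≫ B) (μ : B ≫ B ⟶ B)
    (hfrobL : B ◁ Dc ≫ (α_ B B B).inv ≫ μ ▷ B = μ ≫ Dc)
    (hfrobR : Dc ▷ B ≫ (α_ B B B).hom ≫ B ◁ μ = μ ≫ Dc)
    (honemul : (λ_ B).inv ≫ η ▷ B ≫ μ = 𝟙 B)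
    (hmulone : (ρ_ B).inv ≫ B ◁ η ≫ μ = 𝟙 B)
    (ρlX : X ≫ B ⟶ X) (ρlY : Y ≫ B ⟶ Y)
    (hXa : (α_ X B B).hom ≫ X ◁ μ ≫ ρlX = ρlX ▷ B ≫ ρlX)
    (hYa : (α_ Y B B).hom ≫ Y ◁ μ ≫ ρlY = ρlY ▷ B ≫ ρlY)
    (φ : X ⟶ Y) :
    ((ρ_ X).inv ≫ X ◁ (η ≫ Dc) ≫ (α_ X B B).inv ≫ ρlX ▷ B ≫ φ ▷ B ≫ ρlY) ▷ B ≫ ρlY =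
      ρlX ≫ ((ρ_ X).inv ≫ X ◁ (η ≫ Dc) ≫ (α_ X B B).inv ≫ ρlX ▷ B ≫ φ ▷ B ≫ ρlY) := by
  have h9 : (λ_ B).inv ≫ η ▷ B ≫ μ ≫ Dc = Dc := by rw [reassoc_of% honemul]
  have h10 : (ρ_ B).inv ≫ B ◁ η ≫ μ ≫ Dc = Dc := by rw [reassoc_of% hmulone]
  have hL : ((ρ_ X).inv ≫ X ◁ (η ≫ Dc) ≫ (α_ X B B).inv ≫ ρlX ▷ B ≫ φ ▷ B ≫ ρlY) ▷ B ≫ ρlY =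
      X ◁ Dc ≫ (α_ X B B).inv ≫ ρlX ▷ B ≫ φ ▷ B ≫ ρlY := by
    calc ((ρ_ X).inv ≫ X ◁ (η ≫ Dc) ≫ (α_ X B B).inv ≫ ρlX ▷ B ≫ φ ▷ B ≫ ρlY) ▷ B ≫ ρlY
        = (ρ_ X).inv ▷ B ≫ (X ◁ (η ≫ Dc)) ▷ B ≫ (α_ X B B).inv ▷ B ≫ (ρlX ▷ B) ▷ B ≫
            (φ ▷ B) ▷ B ≫ (ρlY ▷ B ≫ ρlY) := by bicategory
      _ = (ρ_ X).inv ▷ B ≫ (X ◁ (η ≫ Dc)) ▷ B ≫ (α_ X B B).inv ▷ B ≫ (ρlX ▷ B) ▷ B ≫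
            (φ ▷ B) ▷ B ≫ ((α_ Y B B).hom ≫ Y ◁ μ ≫ ρlY) := by rw [hYa]
      _ = (ρ_ X).inv ▷ B ≫ (X ◁ (η ≫ Dc)) ▷ B ≫ (α_ X B B).inv ▷ B ≫ (α_ (X ≫ B) B B).hom ≫
            ρlX ▷ (B ≫ B) ≫ (φ ▷ (B ≫ B) ≫ Y ◁ μ) ≫ ρlY := by bicategory
      _ = (ρ_ X).inv ▷ B ≫ (X ◁ (η ≫ Dc)) ▷ B ≫ (α_ X B B).inv ▷ B ≫ (α_ (X ≫ B) B B).hom ≫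
            ρlX ▷ (B ≫ B) ≫ (X ◁ μ ≫ φ ▷ B) ≫ ρlY := by rw [← whisker_exchange]
      _ = (ρ_ X).inv ▷ B ≫ (X ◁ (η ≫ Dc)) ▷ B ≫ (α_ X B B).inv ▷ B ≫ (α_ (X ≫ B) B B).hom ≫
            (ρlX ▷ (B ≫ B) ≫ X ◁ μ) ≫ φ ▷ B ≫ ρlY := by bicategory
      _ = (ρ_ X).inv ▷ B ≫ (X ◁ (η ≫ Dc)) ▷ B ≫ (α_ X B B).inv ▷ B ≫ (α_ (X ≫ B) B B).hom ≫
            ((X ≫ B) ◁ μ ≫ ρlX ▷ B) ≫ φ ▷ B ≫ ρlY := by rw [← whisker_exchange]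
      _ = X ◁ ((λ_ B).inv ≫ η ▷ B ≫ (Dc ▷ B ≫ (α_ B B B).hom ≫ B ◁ μ)) ≫ (α_ X B B).inv ≫
            ρlX ▷ B ≫ φ ▷ B ≫ ρlY := by bicategory
      _ = X ◁ ((λ_ B).inv ≫ η ▷ B ≫ μ ≫ Dc) ≫ (α_ X B B).inv ≫
            ρlX ▷ B ≫ φ ▷ B ≫ ρlY := by rw [hfrobR]
      _ = X ◁ Dc ≫ (α_ X B B).inv ≫ ρlX ▷ B ≫ φ ▷ B ≫ ρlY := by rw [h9]
  have hR : ρlX ≫ ((ρ_ X).inv ≫ X ◁ (η ≫ Dc) ≫ (α_ X B B).inv ≫ ρlX ▷ B ≫ φ ▷ B ≫ ρlY) =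
      X ◁ Dc ≫ (α_ X B B).inv ≫ ρlX ▷ B ≫ φ ▷ B ≫ ρlY := by
    calc ρlX ≫ ((ρ_ X).inv ≫ X ◁ (η ≫ Dc) ≫ (α_ X B B).inv ≫ ρlX ▷ B ≫ φ ▷ B ≫ ρlY)
        = (ρ_ (X ≫ B)).inv ≫ (ρlX ▷ 𝟙 b ≫ X ◁ (η ≫ Dc)) ≫ (α_ X B B).inv ≫
            ρlX ▷ B ≫ φ ▷ B ≫ ρlY := by bicategory
      _ = (ρ_ (X ≫ B)).inv ≫ ((X ≫ B) ◁ (η ≫ Dc) ≫ ρlX ▷ (B ≫ B)) ≫ (α_ X B B).inv ≫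
            ρlX ▷ B ≫ φ ▷ B ≫ ρlY := by rw [whisker_exchange]
      _ = (ρ_ (X ≫ B)).inv ≫ (X ≫ B) ◁ (η ≫ Dc) ≫ (α_ (X ≫ B) B B).inv ≫
            ((ρlX ▷ B ≫ ρlX) ▷ B) ≫ φ ▷ B ≫ ρlY := by bicategory
      _ = (ρ_ (X ≫ B)).inv ≫ (X ≫ B) ◁ (η ≫ Dc) ≫ (α_ (X ≫ B) B B).inv ≫
            (((α_ X B B).hom ≫ X ◁ μ ≫ ρlX) ▷ B) ≫ φ ▷ B ≫ ρlY := by rw [← hXa]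
      _ = X ◁ ((ρ_ B).inv ≫ B ◁ η ≫ (B ◁ Dc ≫ (α_ B B B).inv ≫ μ ▷ B)) ≫ (α_ X B B).inv ≫
            ρlX ▷ B ≫ φ ▷ B ≫ ρlY := by bicategory
      _ = X ◁ ((ρ_ B).inv ≫ B ◁ η ≫ μ ≫ Dc) ≫ (α_ X B B).inv ≫
            ρlX ▷ B ≫ φ ▷ B ≫ ρlY := by rw [hfrobL]
      _ = X ◁ Dc ≫ (α_ X B B).inv ≫ ρlX ▷ B ≫ φ ▷ B ≫ ρlY := by rw [h10]
  rw [hL, hR]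

end BSide

section ASide
variable {a b : C} {A : a ⟶ a} {X Y : a ⟶ b}

lemma rAvg_fix (η : 𝟙 a ⟶ A) (Dc : A ⟶ A ≫ A) (μ : A ≫ A ⟶ A)
    (hsep : Dc ≫ μ = 𝟙 A)
    (ρrX : A ≫ X ⟶ X) (ρrY : A ≫ Y ⟶ Y)
    (hXa : (α_ A A X).hom ≫ A ◁ ρrX ≫ ρrX = μ ▷ X ≫ ρrX)
    (hXu : (λ_ X).inv ≫ η ▷ X ≫ ρrX = 𝟙 X)
    (φ : X ⟶ Y) (hφ : A ◁ φ ≫ ρrY = ρrX ≫ φ) :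
    (λ_ X).inv ≫ (η ≫ Dc) ▷ X ≫ (α_ A A X).hom ≫ A ◁ ρrX ≫ A ◁ φ ≫ ρrY = φ := by
  rw [hφ, reassoc_of% hXa]
  calc (λ_ X).inv ≫ (η ≫ Dc) ▷ X ≫ μ ▷ X ≫ ρrX ≫ φ
      = (λ_ X).inv ≫ (η ≫ Dc ≫ μ) ▷ X ≫ ρrX ≫ φ := by bicategory
    _ = φ := by rw [hsep, Category.comp_id, reassoc_of% hXu]

lemma rAvg_rightmod (η : 𝟙 a ⟶ A) (Dc : A ⟶ A ≫ A) (μ : A ≫ A ⟶ A)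
    (hfrobL : A ◁ Dc ≫ (α_ A A A).inv ≫ μ ▷ A = μ ≫ Dc)
    (hfrobR : Dc ▷ A ≫ (α_ A A A).hom ≫ A ◁ μ = μ ≫ Dc)
    (honemul : (λ_ A).inv ≫ η ▷ A ≫ μ = 𝟙 A)
    (hmulone : (ρ_ A).inv ≫ A ◁ η ≫ μ = 𝟙 A)
    (ρrX : A ≫ X ⟶ X) (ρrY : A ≫ Y ⟶ Y)
    (hXa : (α_ A A X).hom ≫ A ◁ ρrX ≫ ρrX = μ ▷ X ≫ ρrX)
    (hYa : (α_ A A Y).hom ≫ A ◁ ρrY ≫ ρrY = μ ▷ Y ≫ ρrY)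
    (φ : X ⟶ Y) :
    A ◁ ((λ_ X).inv ≫ (η ≫ Dc) ▷ X ≫ (α_ A A X).hom ≫ A ◁ ρrX ≫ A ◁ φ ≫ ρrY) ≫ ρrY =
      ρrX ≫ ((λ_ X).inv ≫ (η ≫ Dc) ▷ X ≫ (α_ A A X).hom ≫ A ◁ ρrX ≫ A ◁ φ ≫ ρrY) := by
  have h9 : (λ_ A).inv ≫ η ▷ A ≫ μ ≫ Dc = Dc := by rw [reassoc_of% honemul]
  have h10 : (ρ_ A).inv ≫ A ◁ η ≫ μ ≫ Dc = Dc := by rw [reassoc_of% hmulone]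
  have hYa2 : A ◁ ρrY ≫ ρrY = (α_ A A Y).inv ≫ μ ▷ Y ≫ ρrY := by
    rw [← hYa, Iso.inv_hom_id_assoc]
  have hXa2 : A ◁ ρrX ≫ ρrX = (α_ A A X).inv ≫ μ ▷ X ≫ ρrX := by
    rw [← hXa, Iso.inv_hom_id_assoc]
  have hL : A ◁ ((λ_ X).inv ≫ (η ≫ Dc) ▷ X ≫ (α_ A A X).hom ≫ A ◁ ρrX ≫ A ◁ φ ≫ ρrY) ≫ ρrY =
      Dc ▷ X ≫ (α_ A A X).hom ≫ A ◁ ρrX ≫ A ◁ φ ≫ ρrY := by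
    calc A ◁ ((λ_ X).inv ≫ (η ≫ Dc) ▷ X ≫ (α_ A A X).hom ≫ A ◁ ρrX ≫ A ◁ φ ≫ ρrY) ≫ ρrY
        = A ◁ (λ_ X).inv ≫ A ◁ ((η ≫ Dc) ▷ X) ≫ A ◁ (α_ A A X).hom ≫ A ◁ (A ◁ ρrX) ≫
            A ◁ (A ◁ φ) ≫ (A ◁ ρrY ≫ ρrY) := by bicategory
      _ = A ◁ (λ_ X).inv ≫ A ◁ ((η ≫ Dc) ▷ X) ≫ A ◁ (α_ A A X).hom ≫ A ◁ (A ◁ ρrX) ≫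
            A ◁ (A ◁ φ) ≫ ((α_ A A Y).inv ≫ μ ▷ Y ≫ ρrY) := by rw [hYa2]
      _ = A ◁ (λ_ X).inv ≫ A ◁ ((η ≫ Dc) ▷ X) ≫ A ◁ (α_ A A X).hom ≫ (α_ A A (A ≫ X)).inv ≫
            (A ≫ A) ◁ ρrX ≫ ((A ≫ A) ◁ φ ≫ μ ▷ Y) ≫ ρrY := by bicategory
      _ = A ◁ (λ_ X).inv ≫ A ◁ ((η ≫ Dc) ▷ X) ≫ A ◁ (α_ A A X).hom ≫ (α_ A A (A ≫ X)).inv ≫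
            (A ≫ A) ◁ ρrX ≫ (μ ▷ X ≫ A ◁ φ) ≫ ρrY := by rw [whisker_exchange]
      _ = A ◁ (λ_ X).inv ≫ A ◁ ((η ≫ Dc) ▷ X) ≫ A ◁ (α_ A A X).hom ≫ (α_ A A (A ≫ X)).inv ≫
            ((A ≫ A) ◁ ρrX ≫ μ ▷ X) ≫ A ◁ φ ≫ ρrY := by bicategory
      _ = A ◁ (λ_ X).inv ≫ A ◁ ((η ≫ Dc) ▷ X) ≫ A ◁ (α_ A A X).hom ≫ (α_ A A (A ≫ X)).inv ≫
            (μ ▷ (A ≫ X) ≫ A ◁ ρrX) ≫ A ◁ φ ≫ ρrY := by rw [whisker_exchange]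
      _ = ((ρ_ A).inv ≫ A ◁ η ≫ (A ◁ Dc ≫ (α_ A A A).inv ≫ μ ▷ A)) ▷ X ≫ (α_ A A X).hom ≫
            A ◁ ρrX ≫ A ◁ φ ≫ ρrY := by bicategory
      _ = ((ρ_ A).inv ≫ A ◁ η ≫ μ ≫ Dc) ▷ X ≫ (α_ A A X).hom ≫
            A ◁ ρrX ≫ A ◁ φ ≫ ρrY := by rw [hfrobL]
      _ = Dc ▷ X ≫ (α_ A A X).hom ≫ A ◁ ρrX ≫ A ◁ φ ≫ ρrY := by rw [h10]
  have hR : ρrX ≫ ((λ_ X).inv ≫ (η ≫ Dc) ▷ X ≫ (α_ A A X).hom ≫ A ◁ ρrX ≫ A ◁ φ ≫ ρrY) =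
      Dc ▷ X ≫ (α_ A A X).hom ≫ A ◁ ρrX ≫ A ◁ φ ≫ ρrY := by
    calc ρrX ≫ ((λ_ X).inv ≫ (η ≫ Dc) ▷ X ≫ (α_ A A X).hom ≫ A ◁ ρrX ≫ A ◁ φ ≫ ρrY)
        = (λ_ (A ≫ X)).inv ≫ (𝟙 a ◁ ρrX ≫ (η ≫ Dc) ▷ X) ≫ (α_ A A X).hom ≫
            A ◁ ρrX ≫ A ◁ φ ≫ ρrY := by bicategory
      _ = (λ_ (A ≫ X)).inv ≫ ((η ≫ Dc) ▷ (A ≫ X) ≫ (A ≫ A) ◁ ρrX) ≫ (α_ A A X).hom ≫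
            A ◁ ρrX ≫ A ◁ φ ≫ ρrY := by rw [whisker_exchange]
      _ = (λ_ (A ≫ X)).inv ≫ (η ≫ Dc) ▷ (A ≫ X) ≫ (α_ A A (A ≫ X)).hom ≫
            (A ◁ (A ◁ ρrX ≫ ρrX)) ≫ A ◁ φ ≫ ρrY := by bicategory
      _ = (λ_ (A ≫ X)).inv ≫ (η ≫ Dc) ▷ (A ≫ X) ≫ (α_ A A (A ≫ X)).hom ≫
            (A ◁ ((α_ A A X).inv ≫ μ ▷ X ≫ ρrX)) ≫ A ◁ φ ≫ ρrY := by rw [hXa2]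
      _ = ((λ_ A).inv ≫ η ▷ A ≫ (Dc ▷ A ≫ (α_ A A A).hom ≫ A ◁ μ)) ▷ X ≫ (α_ A A X).hom ≫
            A ◁ ρrX ≫ A ◁ φ ≫ ρrY := by bicategory
      _ = ((λ_ A).inv ≫ η ▷ A ≫ μ ≫ Dc) ▷ X ≫ (α_ A A X).hom ≫
            A ◁ ρrX ≫ A ◁ φ ≫ ρrY := by rw [hfrobR]
      _ = Dc ▷ X ≫ (α_ A A X).hom ≫ A ◁ ρrX ≫ A ◁ φ ≫ ρrY := by rw [h9]
  rw [hL, hR]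
end ASide


lemma avg_comm {a b : C} {A : a ⟶ a} {B : b ⟶ b} {X Y : a ⟶ b}
    (ηB : 𝟙 b ⟶ B) (ΔB : B ⟶ B ≫ B) (ηA : 𝟙 a ⟶ A) (ΔA : A ⟶ A ≫ A)
    (ρlX : X ≫ B ⟶ X) (ρrX : A ≫ X ⟶ X) (ρlY : Y ≫ B ⟶ Y) (ρrY : A ≫ Y ⟶ Y)
    (hX5 : ρrX ▷ B ≫ ρlX = (α_ A X B).hom ≫ A ◁ ρlX ≫ ρrX)
    (hY5 : ρrY ▷ B ≫ ρlY = (α_ A Y B).hom ≫ A ◁ ρlY ≫ ρrY)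
    (φ : X ⟶ Y) :
    (ρ_ X).inv ≫ X ◁ (ηB ≫ ΔB) ≫ (α_ X B B).inv ≫ ρlX ▷ B ≫
      ((λ_ X).inv ≫ (ηA ≫ ΔA) ▷ X ≫ (α_ A A X).hom ≫ A ◁ ρrX ≫ A ◁ φ ≫ ρrY) ▷ B ≫ ρlY =
    (λ_ X).inv ≫ (ηA ≫ ΔA) ▷ X ≫ (α_ A A X).hom ≫ A ◁ ρrX ≫
      A ◁ ((ρ_ X).inv ≫ X ◁ (ηB ≫ ΔB) ≫ (α_ X B B).inv ≫ ρlX ▷ B ≫ φ ▷ B ≫ ρlY) ≫ ρrY := by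
  calc (ρ_ X).inv ≫ X ◁ (ηB ≫ ΔB) ≫ (α_ X B B).inv ≫ ρlX ▷ B ≫
      ((λ_ X).inv ≫ (ηA ≫ ΔA) ▷ X ≫ (α_ A A X).hom ≫ A ◁ ρrX ≫ A ◁ φ ≫ ρrY) ▷ B ≫ ρlY
      = (ρ_ X).inv ≫ X ◁ (ηB ≫ ΔB) ≫ (α_ X B B).inv ≫ ρlX ▷ B ≫ (λ_ X).inv ▷ B ≫
          ((ηA ≫ ΔA) ▷ X) ▷ B ≫ (α_ A A X).hom ▷ B ≫ (A ◁ ρrX) ▷ B ≫ (A ◁ φ) ▷ B ≫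
          (ρrY ▷ B ≫ ρlY) := by bicategory
    _ = (ρ_ X).inv ≫ X ◁ (ηB ≫ ΔB) ≫ (α_ X B B).inv ≫ ρlX ▷ B ≫ (λ_ X).inv ▷ B ≫
          ((ηA ≫ ΔA) ▷ X) ▷ B ≫ (α_ A A X).hom ▷ B ≫ (A ◁ ρrX) ▷ B ≫ (A ◁ φ) ▷ B ≫
          ((α_ A Y B).hom ≫ A ◁ ρlY ≫ ρrY) := by rw [hY5]
    _ = (λ_ X).inv ≫
          (𝟙 a ◁ ((ρ_ X).inv ≫ X ◁ (ηB ≫ ΔB) ≫ (α_ X B B).inv ≫ ρlX ▷ B) ≫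
            (ηA ≫ ΔA) ▷ (X ≫ B)) ≫ (α_ A A (X ≫ B)).hom ≫
          A ◁ ((α_ A X B).inv ≫ ρrX ▷ B ≫ φ ▷ B ≫ ρlY) ≫ ρrY := by bicategory
    _ = (λ_ X).inv ≫
          ((ηA ≫ ΔA) ▷ X ≫
            (A ≫ A) ◁ ((ρ_ X).inv ≫ X ◁ (ηB ≫ ΔB) ≫ (α_ X B B).inv ≫ ρlX ▷ B)) ≫
          (α_ A A (X ≫ B)).hom ≫
          A ◁ ((α_ A X B).inv ≫ ρrX ▷ B ≫ φ ▷ B ≫ ρlY) ≫ ρrY := by rw [whisker_exchange]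
    _ = (λ_ X).inv ≫ (ηA ≫ ΔA) ▷ X ≫ (α_ A A X).hom ≫
          A ◁ ((ρ_ (A ≫ X)).inv ≫ (A ≫ X) ◁ (ηB ≫ ΔB) ≫ (α_ (A ≫ X) B B).inv ≫
            (((α_ A X B).hom ≫ A ◁ ρlX ≫ ρrX) ▷ B) ≫ φ ▷ B ≫ ρlY) ≫ ρrY := by bicategory
    _ = (λ_ X).inv ≫ (ηA ≫ ΔA) ▷ X ≫ (α_ A A X).hom ≫
          A ◁ ((ρ_ (A ≫ X)).inv ≫ (A ≫ X) ◁ (ηB ≫ ΔB) ≫ (α_ (A ≫ X) B B).inv ≫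
            ((ρrX ▷ B ≫ ρlX) ▷ B) ≫ φ ▷ B ≫ ρlY) ≫ ρrY := by rw [← hX5]
    _ = (λ_ X).inv ≫ (ηA ≫ ΔA) ▷ X ≫ (α_ A A X).hom ≫
          A ◁ ((ρ_ (A ≫ X)).inv ≫ ((A ≫ X) ◁ (ηB ≫ ΔB) ≫ ρrX ▷ (B ≫ B)) ≫
            (α_ X B B).inv ≫ ρlX ▷ B ≫ φ ▷ B ≫ ρlY) ≫ ρrY := by bicategory
    _ = (λ_ X).inv ≫ (ηA ≫ ΔA) ▷ X ≫ (α_ A A X).hom ≫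
          A ◁ ((ρ_ (A ≫ X)).inv ≫ (ρrX ▷ 𝟙 b ≫ X ◁ (ηB ≫ ΔB)) ≫
            (α_ X B B).inv ≫ ρlX ▷ B ≫ φ ▷ B ≫ ρlY) ≫ ρrY := by rw [whisker_exchange]
    _ = (λ_ X).inv ≫ (ηA ≫ ΔA) ▷ X ≫ (α_ A A X).hom ≫ A ◁ ρrX ≫
          A ◁ ((ρ_ X).inv ≫ X ◁ (ηB ≫ ΔB) ≫ (α_ X B B).inv ≫ ρlX ▷ B ≫ φ ▷ B ≫ ρlY) ≫
          ρrY := by bicategory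

end Helpers

/-- For separable Frobenius algebras `A` on `a` and `B` on `b`
and `B`-`A`-bimodules `X, Y : a → b`, the maps `P_B` and `P_A` commute, their
composite `π_{BA} := P_B ∘ P_A` is idempotent, `π_{BA}(φ)` is a bimodule map
for every `φ`, and `π_{BA}(φ) = φ` whenever `φ` is a bimodule map; hence
`π_{BA}` projects `Hom(X, Y)` onto the bimodule maps. -/
theorem piBA_projects_onto_bimodule_maps {a b : C} (FA : Frob a) (FB : Frob b)
    (hsepA : FA.comul ≫ FA.mul = 𝟙 FA.A) (hsepB : FB.comul ≫ FB.mul = 𝟙 FB.A)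
    {X Y : a ⟶ b}
    (ρlX : X ≫ FB.A ⟶ X) (ρrX : FA.A ≫ X ⟶ X)
    (ρlY : Y ≫ FB.A ⟶ Y) (ρrY : FA.A ≫ Y ⟶ Y)
    (hX : IsBimodule FA FB X ρlX ρrX) (hY : IsBimodule FA FB Y ρlY ρrY) :
    (∀ φ : X ⟶ Y,
      PB FA FB ρlX ρlY (PA FA FB ρrX ρrY φ) = PA FA FB ρrX ρrY (PB FA FB ρlX ρlY φ)) ∧
    (∀ φ : X ⟶ Y,
      PB FA FB ρlX ρlY (PA FA FB ρrX ρrY (PB FA FB ρlX ρlY (PA FA FB ρrX ρrY φ))) =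
        PB FA FB ρlX ρlY (PA FA FB ρrX ρrY φ)) ∧
    (∀ φ : X ⟶ Y,
      IsBimoduleMap FA FB ρlX ρrX ρlY ρrY (PB FA FB ρlX ρlY (PA FA FB ρrX ρrY φ))) ∧
    (∀ φ : X ⟶ Y, IsBimoduleMap FA FB ρlX ρrX ρlY ρrY φ →
      PB FA FB ρlX ρlY (PA FA FB ρrX ρrY φ) = φ) := by
  
  obtain ⟨hX1, hX2, hX3, hX4, hX5⟩ := hX
  obtain ⟨hY1, hY2, hY3, hY4, hY5⟩ := hY
  have Hcomm : ∀ ψ : X ⟶ Y, PB FA FB ρlX ρlY (PA FA FB ρrX ρrY ψ) =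
      PA FA FB ρrX ρrY (PB FA FB ρlX ρlY ψ) := fun ψ =>
    avg_comm FB.one FB.comul FA.one FA.comul ρlX ρrX ρlY ρrY hX5 hY5 ψ
  have HBl : ∀ ψ : X ⟶ Y, (PB FA FB ρlX ρlY ψ) ▷ FB.A ≫ ρlY =
      ρlX ≫ PB FA FB ρlX ρlY ψ := fun ψ =>
    lAvg_leftmod FB.one FB.comul FB.mul FB.frob_left FB.frob_right FB.one_mul FB.mul_one
      ρlX ρlY hX1 hY1 ψ
  have HAr : ∀ ψ : X ⟶ Y, FA.A ◁ (PA FA FB ρrX ρrY ψ) ≫ ρrY =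
      ρrX ≫ PA FA FB ρrX ρrY ψ := fun ψ =>
    rAvg_rightmod FA.one FA.comul FA.mul FA.frob_left FA.frob_right FA.one_mul FA.mul_one
      ρrX ρrY hX3 hY3 ψ
  have HBfix : ∀ ψ : X ⟶ Y, ψ ▷ FB.A ≫ ρlY = ρlX ≫ ψ → PB FA FB ρlX ρlY ψ = ψ :=
    fun ψ hψ => lAvg_fix FB.one FB.comul FB.mul hsepB ρlX ρlY hX1 hX2 ψ hψ
  have HAfix : ∀ ψ : X ⟶ Y, FA.A ◁ ψ ≫ ρrY = ρrX ≫ ψ → PA FA FB ρrX ρrY ψ = ψ :=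
    fun ψ hψ => rAvg_fix FA.one FA.comul FA.mul hsepA ρrX ρrY hX3 hX4 ψ hψ
  have Hbimod : ∀ φ : X ⟶ Y,
      IsBimoduleMap FA FB ρlX ρrX ρlY ρrY (PB FA FB ρlX ρlY (PA FA FB ρrX ρrY φ)) :=
    fun φ => ⟨HBl _, by rw [Hcomm]; exact HAr _⟩
  refine ⟨Hcomm, ?_, Hbimod, ?_⟩
  · intro φ
    obtain ⟨h1, h2⟩ := Hbimod φ
    rw [HAfix _ h2, HBfix _ h1]
  · intro φ hφ
    rw [HAfix _ hφ.2, HBfix _ hφ.1]
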